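/- Let F be a finite field, p a prime different from char(F), and C = C^⊥ ⊆ F^n a self-dual code (with respect to the standard bilinear form ∑ x_i y_i) invariant under a coordinate permutation σ of order p with t cycles of length p and f fixed points (n = pt + f). Let C(σ) be the fixed code and E = {c ∈ C : the coordinate sum of c over each cycle is 0 and c vanishes at all fixed points}. Then dim_F C(σ) = (t+f)/2 and dim_F E = t(p−1)/2. -/

import Mathlib

open Finset

/-- The linear action of a coordinate permutation on `F^n`: `(π x) i = x (π⁻¹ i)`. -/
def permLinear {F : Type*} [Field F] {n : ℕ} (π : Equiv.Perm (Fin n)) :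
    (Fin n → F) →ₗ[F] (Fin n → F) where
  toFun x := fun i => x (π⁻¹ i)
  map_add' _ _ := rfl
  map_smul' _ _ := rfl

/-- Vectors that are constant on every cycle of `π`. -/
def constantOnCycles {F : Type*} [Field F] {n : ℕ} (π : Equiv.Perm (Fin n)) :
    Submodule F (Fin n → F) where
  carrier := {x | ∀ i, x (π i) = x i}
  add_mem' := by intro a b ha hb i; simp [ha i, hb i]
  zero_mem' := fun _ => rfl
  smul_mem' := by intro c x hx i; simp [hx i]

/-- Vectors vanishing on all fixed points of `π` whose coordinate sum over each
cycle (of length `p`) is zero. -/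
def cycleSumZero {F : Type*} [Field F] {n : ℕ} (π : Equiv.Perm (Fin n)) (p : ℕ) :
    Submodule F (Fin n → F) where
  carrier := {x | (∀ i, π i = i → x i = 0) ∧
    ∀ i, ∑ k ∈ Finset.range p, x ((π ^ k) i) = 0}
  add_mem' := by
    rintro a b ⟨ha1, ha2⟩ ⟨hb1, hb2⟩
    refine ⟨fun i hi => by simp [ha1 i hi, hb1 i hi], fun i => ?_⟩
    simp only [Pi.add_apply, Finset.sum_add_distrib, ha2 i, hb2 i, add_zero]
  zero_mem' := ⟨fun _ _ => rfl, fun i => by simp⟩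
  smul_mem' := by
    rintro c x ⟨h1, h2⟩
    refine ⟨fun i hi => by simp [h1 i hi], fun i => ?_⟩
    simp only [Pi.smul_apply, smul_eq_mul, ← Finset.mul_sum, h2 i, mul_zero]

/-- Self-duality with respect to a bilinear form given as a function. -/
def IsSelfDualWith {F : Type*} [Field F] {n : ℕ}
    (B : (Fin n → F) → (Fin n → F) → F) (C : Submodule F (Fin n → F)) : Prop :=
  ∀ x, x ∈ C ↔ ∀ c ∈ C, B x c = 0

/-- The standard bilinear form `∑ i, x i * y i`. -/
def stdB {F : Type*} [Field F] {n : ℕ} (x y : Fin n → F) : F := ∑ i, x i * y i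

section DimHelpers

open Finset

private lemma sum_range_shift' {M : Type*} [AddCommGroup M] {p : ℕ} (g : ℕ → M)
    (hg : g p = g 0) :
    ∑ k ∈ Finset.range p, g (k + 1) = ∑ k ∈ Finset.range p, g k := by
  have h1 : ∑ k ∈ Finset.range (p + 1), g k = (∑ k ∈ Finset.range p, g (k + 1)) + g 0 :=
    Finset.sum_range_succ' g p
  have h2 : ∑ k ∈ Finset.range (p + 1), g k = (∑ k ∈ Finset.range p, g k) + g p :=
    Finset.sum_range_succ g p
  have h3 := h1.symm.trans h2
  rw [hg] at h3
  exact add_right_cancel h3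

private lemma sum_range_pmul {M : Type*} [AddCommMonoid M] (g : ℕ → M) (p : ℕ) :
    ∀ t, ∑ j ∈ Finset.range (p * t), g j
      = ∑ q ∈ Finset.range t, ∑ r ∈ Finset.range p, g (p * q + r)
  | 0 => by simp
  | t + 1 => by
    rw [Nat.mul_succ, Finset.sum_range_add, sum_range_pmul g p t, Finset.sum_range_succ]

variable {F : Type*} [Field F] {p t f : ℕ}

private lemma nat_aux1 {m f i t : ℕ} (h1 : i < m + f) (h2 : ¬ i < m) : t + (i - m) < t + f := by
  omega

private lemma blk_lt {q r : ℕ} (hq : q < t) (hr : r < p) : p * q + r < p * t := by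
  calc p * q + r < p * (q + 1) := by rw [Nat.mul_succ]; exact Nat.add_lt_add_left hr _
  _ ≤ p * t := Nat.mul_le_mul_left p hq

private lemma sigma_pow_val (hp0 : 0 < p) (σ : Equiv.Perm (Fin (p * t + f)))
    (hσ : ∀ i : Fin (p * t + f), (σ i : ℕ) =
      if (i : ℕ) < p * t then p * ((i : ℕ) / p) + (((i : ℕ) % p + 1) % p) else (i : ℕ)) :
    ∀ (k : ℕ) (i : Fin (p * t + f)), ((σ ^ k) i : ℕ) =
      if (i : ℕ) < p * t then p * ((i : ℕ) / p) + (((i : ℕ) % p + k) % p) else (i : ℕ) := by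
  intro k
  induction k with
  | zero =>
    intro i
    simp only [pow_zero, Equiv.Perm.coe_one, id_eq, Nat.add_zero]
    split
    · rw [Nat.mod_mod_of_dvd _ dvd_rfl, Nat.div_add_mod]
    · rfl
  | succ k ih =>
    intro i
    have hstep : ((σ ^ (k + 1)) i : ℕ) = (σ ((σ ^ k) i) : ℕ) := by
      rw [pow_succ']
      rfl
    rw [hstep, hσ ((σ ^ k) i), ih i]
    by_cases hi : (i : ℕ) < p * t
    · simp only [hi, if_true]
      set a := ((i : ℕ) % p + k) % p with ha
      have hap : a < p := Nat.mod_lt _ hp0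
      have hjlt : p * ((i : ℕ) / p) + a < p * t := by
        have hq : (i : ℕ) / p < t := Nat.div_lt_of_lt_mul hi
        exact blk_lt hq hap
      simp only [hjlt, if_true]
      have hdiv : (p * ((i : ℕ) / p) + a) / p = (i : ℕ) / p := by
        rw [Nat.mul_add_div hp0, Nat.div_eq_of_lt hap, Nat.add_zero]
      have hmod : (p * ((i : ℕ) / p) + a) % p = a := by
        rw [Nat.mul_add_mod, Nat.mod_eq_of_lt hap]
      rw [hdiv, hmod]
      congr 1
      rw [← Nat.add_assoc]
      exact (Nat.mod_modEq ((i : ℕ) % p + k) p).add_right 1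
    · simp only [hi, if_false]

private lemma sigma_fix (σ : Equiv.Perm (Fin (p * t + f)))
    (hσ : ∀ i : Fin (p * t + f), (σ i : ℕ) =
      if (i : ℕ) < p * t then p * ((i : ℕ) / p) + (((i : ℕ) % p + 1) % p) else (i : ℕ))
    (i : Fin (p * t + f)) (h : ¬ (i : ℕ) < p * t) : σ i = i := by
  apply Fin.ext
  rw [hσ i, if_neg h]

private lemma sigma_pow_p (hp0 : 0 < p) (σ : Equiv.Perm (Fin (p * t + f)))
    (hσ : ∀ i : Fin (p * t + f), (σ i : ℕ) =
      if (i : ℕ) < p * t then p * ((i : ℕ) / p) + (((i : ℕ) % p + 1) % p) else (i : ℕ))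
    (i : Fin (p * t + f)) : (σ ^ p) i = i := by
  apply Fin.ext
  rw [sigma_pow_val hp0 σ hσ p i]
  split
  · rw [Nat.add_mod_right, Nat.mod_mod_of_dvd _ dvd_rfl, Nat.div_add_mod]
  · rfl

private lemma perm_pow_fix {n : ℕ} (σ : Equiv.Perm (Fin n)) (i : Fin n) (h : σ i = i) :
    ∀ k, (σ ^ k) i = i := by
  intro k
  induction k with
  | zero => rfl
  | succ k ih =>
    have : (σ ^ (k + 1)) i = σ ((σ ^ k) i) := by rw [pow_succ']; rfl
    rw [this, ih, h]

private lemma constant_pow {n : ℕ} (σ : Equiv.Perm (Fin n)) (x : Fin n → F)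
    (hx : x ∈ constantOnCycles σ) : ∀ (k : ℕ) (i : Fin n), x ((σ ^ k) i) = x i := by
  have hx' : ∀ i, x (σ i) = x i := hx
  intro k
  induction k with
  | zero => intro i; rfl
  | succ k ih =>
    intro i
    have : (σ ^ (k + 1)) i = (σ ^ k) (σ i) := by rw [pow_succ]; rfl
    rw [this, ih (σ i), hx' i]

/-- The averaging projection onto cycle-constant vectors. -/
noncomputable def cycAvg (p : ℕ) {F : Type*} [Field F] {n : ℕ} (σ : Equiv.Perm (Fin n))
    (x : Fin n → F) : Fin n → F :=
  fun i => (p : F)⁻¹ * ∑ k ∈ Finset.range p, x ((σ ^ k) i)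

private lemma cycAvg_mem_constant (hp0 : 0 < p) (σ : Equiv.Perm (Fin (p * t + f)))
    (hσ : ∀ i : Fin (p * t + f), (σ i : ℕ) =
      if (i : ℕ) < p * t then p * ((i : ℕ) / p) + (((i : ℕ) % p + 1) % p) else (i : ℕ))
    (x : Fin (p * t + f) → F) : cycAvg p σ x ∈ constantOnCycles σ := by
  intro i
  show (p : F)⁻¹ * ∑ k ∈ Finset.range p, x ((σ ^ k) (σ i))
    = (p : F)⁻¹ * ∑ k ∈ Finset.range p, x ((σ ^ k) i)
  congr 1
  have h1 : ∀ k : ℕ, (σ ^ k) (σ i) = (σ ^ (k + 1)) i := by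
    intro k; rw [pow_succ]; rfl
  calc ∑ k ∈ Finset.range p, x ((σ ^ k) (σ i))
      = ∑ k ∈ Finset.range p, x ((σ ^ (k + 1)) i) := by
        exact Finset.sum_congr rfl fun k _ => by rw [h1 k]
    _ = ∑ k ∈ Finset.range p, x ((σ ^ k) i) := by
        refine sum_range_shift' (fun k => x ((σ ^ k) i)) ?_
        show x ((σ ^ p) i) = x ((σ ^ 0) i)
        rw [sigma_pow_p hp0 σ hσ i, pow_zero]
        rfl

private lemma cycAvg_fixed (hpF : (p : F) ≠ 0) {n : ℕ} (σ : Equiv.Perm (Fin n))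
    (x : Fin n → F) (i : Fin n) (h : σ i = i) : cycAvg p σ x i = x i := by
  unfold cycAvg
  have : ∀ k ∈ Finset.range p, x ((σ ^ k) i) = x i := fun k _ => by
    rw [perm_pow_fix σ i h k]
  rw [Finset.sum_congr rfl this, Finset.sum_const, Finset.card_range, nsmul_eq_mul,
    ← mul_assoc, inv_mul_cancel₀ hpF, one_mul]

private lemma sub_cycAvg_mem (hp0 : 0 < p) (hpF : (p : F) ≠ 0)
    (σ : Equiv.Perm (Fin (p * t + f)))
    (hσ : ∀ i : Fin (p * t + f), (σ i : ℕ) =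
      if (i : ℕ) < p * t then p * ((i : ℕ) / p) + (((i : ℕ) % p + 1) % p) else (i : ℕ))
    (x : Fin (p * t + f) → F) : x - cycAvg p σ x ∈ cycleSumZero σ p := by
  constructor
  · intro i hi
    show x i - cycAvg p σ x i = 0
    rw [cycAvg_fixed hpF σ x i hi, sub_self]
  · intro i
    have hconst := constant_pow σ (cycAvg p σ x) (cycAvg_mem_constant hp0 σ hσ x)
    have h1 : ∑ k ∈ Finset.range p, (x - cycAvg p σ x) ((σ ^ k) i)
        = (∑ k ∈ Finset.range p, x ((σ ^ k) i))
          - ∑ k ∈ Finset.range p, cycAvg p σ x ((σ ^ k) i) := by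
      rw [← Finset.sum_sub_distrib]; rfl
    rw [h1]
    have h2 : ∑ k ∈ Finset.range p, cycAvg p σ x ((σ ^ k) i)
        = (p : F) * cycAvg p σ x i := by
      rw [Finset.sum_congr rfl fun k _ => hconst k i, Finset.sum_const, Finset.card_range,
        nsmul_eq_mul]
    rw [h2]
    show (∑ k ∈ Finset.range p, x ((σ ^ k) i))
      - (p : F) * ((p : F)⁻¹ * ∑ k ∈ Finset.range p, x ((σ ^ k) i)) = 0
    rw [← mul_assoc, mul_inv_cancel₀ hpF, one_mul, sub_self]

private lemma pairing_zero (hp0 : 0 < p) (σ : Equiv.Perm (Fin (p * t + f)))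
    (hσ : ∀ i : Fin (p * t + f), (σ i : ℕ) =
      if (i : ℕ) < p * t then p * ((i : ℕ) / p) + (((i : ℕ) % p + 1) % p) else (i : ℕ))
    (x y : Fin (p * t + f) → F)
    (hx : x ∈ constantOnCycles σ) (hy : y ∈ cycleSumZero σ p) :
    ∑ i, x i * y i = 0 := by
  obtain ⟨hy1, hy2⟩ := hy
  have hpow := sigma_pow_val hp0 σ hσ
  set g : ℕ → F := fun j => if h : j < p * t + f then x ⟨j, h⟩ * y ⟨j, h⟩ else 0 with hg
  have h0 : ∑ i, x i * y i = ∑ j ∈ Finset.range (p * t + f), g j := by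
    rw [← Fin.sum_univ_eq_sum_range]
    refine Finset.sum_congr rfl fun i _ => ?_
    simp [g, i.isLt]
  have key : ∀ (q : ℕ) (hq : q < t) (h00 : p * q < p * t + f) (r : ℕ) (hr : r < p)
      (hlt : p * q + r < p * t + f),
      (σ ^ r) (⟨p * q, h00⟩ : Fin (p * t + f)) = ⟨p * q + r, hlt⟩ := by
    intro q hq h00 r hr hlt
    apply Fin.ext
    rw [hpow r ⟨p * q, h00⟩]
    have hb : p * q < p * t := blk_lt hq hp0
    rw [if_pos hb]
    show p * (p * q / p) + (p * q % p + r) % p = p * q + r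
    rw [Nat.mul_div_cancel_left _ hp0, Nat.mul_mod_right, Nat.zero_add, Nat.mod_eq_of_lt hr]
  have hmain : ∀ q ∈ Finset.range t, ∑ r ∈ Finset.range p, g (p * q + r) = 0 := by
    intro q hqmem
    have hq : q < t := Finset.mem_range.mp hqmem
    have h00 : p * q < p * t + f :=
      lt_of_lt_of_le (blk_lt hq hp0) (Nat.le_add_right _ _)
    have hterm : ∀ r ∈ Finset.range p, g (p * q + r)
        = x ⟨p * q, h00⟩ * y ((σ ^ r) ⟨p * q, h00⟩) := by
      intro r hrmem
      have hr : r < p := Finset.mem_range.mp hrmem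
      have hlt : p * q + r < p * t + f :=
        lt_of_lt_of_le (blk_lt hq hr) (Nat.le_add_right _ _)
      have hkey := key q hq h00 r hr hlt
      have hxeq : x (⟨p * q + r, hlt⟩ : Fin (p * t + f)) = x ⟨p * q, h00⟩ := by
        rw [← hkey]
        exact constant_pow σ x hx r _
      show (if h : p * q + r < p * t + f then x ⟨p * q + r, h⟩ * y ⟨p * q + r, h⟩ else 0)
        = x ⟨p * q, h00⟩ * y ((σ ^ r) ⟨p * q, h00⟩)
      rw [dif_pos hlt, hxeq, hkey]
    rw [Finset.sum_congr rfl hterm, ← Finset.mul_sum, hy2 ⟨p * q, h00⟩, mul_zero]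
  have hfix : ∀ j ∈ Finset.range f, g (p * t + j) = 0 := by
    intro j hj
    have hjf : j < f := Finset.mem_range.mp hj
    have h1 : p * t + j < p * t + f := Nat.add_lt_add_left hjf _
    have h2 : ¬ (p * t + j < p * t) := Nat.not_lt.mpr (Nat.le_add_right _ _)
    have h3 : y ⟨p * t + j, h1⟩ = 0 := hy1 _ (sigma_fix σ hσ _ h2)
    show (if h : p * t + j < p * t + f then x ⟨p * t + j, h⟩ * y ⟨p * t + j, h⟩ else 0) = 0
    rw [dif_pos h1, h3, mul_zero]
  rw [h0, Finset.sum_range_add, sum_range_pmul g p t, Finset.sum_eq_zero hmain,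
    Finset.sum_eq_zero hfix, add_zero]

private lemma cycAvg_mem_C {n : ℕ} (σ : Equiv.Perm (Fin n)) (C : Submodule F (Fin n → F))
    (hinv : C.map (permLinear σ) = C) (x : Fin n → F) (hx : x ∈ C) : cycAvg p σ x ∈ C := by
  have hmem : ∀ z ∈ C, (fun i => z (σ i)) ∈ C := by
    intro z hz
    rw [← hinv] at hz
    obtain ⟨w, hw, rfl⟩ := hz
    have hzw : (fun i => (permLinear σ w : Fin n → F) (σ i)) = w := by
      funext i
      show w (σ⁻¹ (σ i)) = w i
      rw [← Equiv.Perm.mul_apply, inv_mul_cancel, Equiv.Perm.one_apply]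
    rw [hzw]
    exact hw
  have hsk : ∀ k : ℕ, (fun i => x ((σ ^ k) i)) ∈ C := by
    intro k
    induction k with
    | zero =>
      have h1 : (fun i => x ((σ ^ 0) i)) = x := by
        funext i; rw [pow_zero]; rfl
      rw [h1]; exact hx
    | succ k ih =>
      have h1 : (fun i => x ((σ ^ (k + 1)) i)) = (fun i => (fun j => x ((σ ^ k) j)) (σ i)) := by
        funext i
        show x ((σ ^ (k + 1)) i) = x ((σ ^ k) (σ i))
        rw [pow_succ]; rfl
      rw [h1]
      exact hmem _ ih
  have hrepr : cycAvg p σ x = (p : F)⁻¹ • ∑ k ∈ Finset.range p, (fun i => x ((σ ^ k) i)) := by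
    funext i
    simp [cycAvg, Finset.sum_apply]
  rw [hrepr]
  exact Submodule.smul_mem C _ (Submodule.sum_mem C fun k _ => hsk k)

private lemma div_lt_tf {p t f i : ℕ} (h : i < p * t) : i / p < t + f :=
  Nat.lt_add_right f (Nat.div_lt_of_lt_mul h)

private lemma finrank_const (hp0 : 0 < p) (σ : Equiv.Perm (Fin (p * t + f)))
    (hσ : ∀ i : Fin (p * t + f), (σ i : ℕ) =
      if (i : ℕ) < p * t then p * ((i : ℕ) / p) + (((i : ℕ) % p + 1) % p) else (i : ℕ)) :
    Module.finrank F (constantOnCycles σ : Submodule F (Fin (p * t + f) → F)) = t + f := by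
  have hpow := sigma_pow_val hp0 σ hσ
  let φ : (Fin (t + f) → F) →ₗ[F] (Fin (p * t + f) → F) :=
    { toFun := fun y i =>
        if h : (i : ℕ) < p * t then y ⟨(i : ℕ) / p, div_lt_tf h⟩
        else y ⟨t + ((i : ℕ) - p * t), nat_aux1 i.isLt h⟩
      map_add' := by intro y z; funext i; by_cases h : (i : ℕ) < p * t <;> simp [h]
      map_smul' := by intro c y; funext i; by_cases h : (i : ℕ) < p * t <;> simp [h] }
  have hval1 : ∀ (y : Fin (t + f) → F) (i : Fin (p * t + f)) (h : (i : ℕ) < p * t),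
      φ y i = y ⟨(i : ℕ) / p, div_lt_tf h⟩ := by
    intro y i h
    show dite _ _ _ = _
    rw [dif_pos h]
  have hval2 : ∀ (y : Fin (t + f) → F) (i : Fin (p * t + f)) (h : ¬ (i : ℕ) < p * t),
      φ y i = y ⟨t + ((i : ℕ) - p * t), nat_aux1 i.isLt h⟩ := by
    intro y i h
    show dite _ _ _ = _
    rw [dif_neg h]
  have hinj : Function.Injective φ := by
    intro y z h
    funext j
    rcases lt_or_ge (j : ℕ) t with hj | hj
    · have hplt : p * (j : ℕ) < p * t := by
        have := blk_lt (p := p) hj hp0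
        rwa [Nat.add_zero] at this
      have hlt : p * (j : ℕ) < p * t + f := lt_of_lt_of_le hplt (Nat.le_add_right _ _)
      have h1 := congrFun h (⟨p * (j : ℕ), hlt⟩ : Fin (p * t + f))
      rw [hval1 y _ hplt, hval1 z _ hplt] at h1
      have hidx : (⟨(p * (j : ℕ)) / p, div_lt_tf hplt⟩ : Fin (t + f)) = j :=
        Fin.ext (Nat.mul_div_cancel_left _ hp0)
      rwa [hidx] at h1
    · have hjf : (j : ℕ) - t < f := by have := j.isLt; omega
      have hlt : p * t + ((j : ℕ) - t) < p * t + f := Nat.add_lt_add_left hjf _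
      have hnl : ¬ (p * t + ((j : ℕ) - t) < p * t) := Nat.not_lt.mpr (Nat.le_add_right _ _)
      have h1 := congrFun h (⟨p * t + ((j : ℕ) - t), hlt⟩ : Fin (p * t + f))
      rw [hval2 y _ hnl, hval2 z _ hnl] at h1
      have hidx : (⟨t + (p * t + ((j : ℕ) - t) - p * t),
          nat_aux1 hlt hnl⟩ : Fin (t + f)) = j := by
        apply Fin.ext
        show t + (p * t + ((j : ℕ) - t) - p * t) = (j : ℕ)
        rw [Nat.add_sub_cancel_left]
        exact Nat.add_sub_cancel' hj
      rwa [hidx] at h1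
  have hrange : LinearMap.range φ = constantOnCycles σ := by
    apply le_antisymm
    · rintro _ ⟨y, rfl⟩
      intro i
      by_cases hi : (i : ℕ) < p * t
      · have hσi : ((σ i : Fin (p * t + f)) : ℕ) < p * t := by
          rw [hσ i, if_pos hi]
          exact blk_lt (Nat.div_lt_of_lt_mul hi) (Nat.mod_lt _ hp0)
        rw [hval1 y _ hσi, hval1 y _ hi]
        congr 1
        apply Fin.ext
        show ((σ i : Fin (p * t + f)) : ℕ) / p = (i : ℕ) / p
        rw [hσ i, if_pos hi, Nat.mul_add_div hp0,
          Nat.div_eq_of_lt (Nat.mod_lt _ hp0), Nat.add_zero]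
      · rw [sigma_fix σ hσ i hi]
    · intro x hx
      refine ⟨fun j => if hj : (j : ℕ) < t
          then x ⟨p * (j : ℕ), lt_of_lt_of_le
            (by have := blk_lt (p := p) hj hp0; rwa [Nat.add_zero] at this)
            (Nat.le_add_right _ _)⟩
          else x ⟨p * t + ((j : ℕ) - t),
            Nat.add_lt_add_left (by have := j.isLt; omega) _⟩, ?_⟩
      funext i
      by_cases hi : (i : ℕ) < p * t
      · rw [hval1 _ _ hi]
        have hdlt : (i : ℕ) / p < t := Nat.div_lt_of_lt_mul hi
        show dite _ _ _ = x i
        rw [dif_pos hdlt]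
        have hble : p * ((i : ℕ) / p) ≤ (i : ℕ) := Nat.mul_div_le _ _
        have h00 : p * ((i : ℕ) / p) < p * t + f :=
          lt_of_le_of_lt hble (lt_of_lt_of_le hi (Nat.le_add_right _ _))
        have hkey : (σ ^ ((i : ℕ) % p)) (⟨p * ((i : ℕ) / p), h00⟩ : Fin (p * t + f)) = i := by
          apply Fin.ext
          rw [hpow _ _]
          have hb : p * ((i : ℕ) / p) < p * t := lt_of_le_of_lt hble hi
          rw [if_pos hb]
          show p * (p * ((i : ℕ) / p) / p) + (p * ((i : ℕ) / p) % p + (i : ℕ) % p) % p = (i : ℕ)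
          rw [Nat.mul_div_cancel_left _ hp0, Nat.mul_mod_right, Nat.zero_add,
            Nat.mod_eq_of_lt (Nat.mod_lt _ hp0), Nat.div_add_mod]
        calc x ⟨p * ((i : ℕ) / p), h00⟩
            = x ((σ ^ ((i : ℕ) % p)) ⟨p * ((i : ℕ) / p), h00⟩) :=
              (constant_pow σ x hx _ _).symm
          _ = x i := by rw [hkey]
      · rw [hval2 _ _ hi]
        have hnl : ¬ (t + ((i : ℕ) - p * t) < t) := Nat.not_lt.mpr (Nat.le_add_right _ _)
        show dite _ _ _ = x i
        rw [dif_neg hnl]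
        congr 1
        apply Fin.ext
        show p * t + (t + ((i : ℕ) - p * t) - t) = (i : ℕ)
        rw [Nat.add_sub_cancel_left]
        exact Nat.add_sub_cancel' (Nat.le_of_not_lt hi)
  rw [← hrange, ← (LinearEquiv.ofInjective φ hinj).finrank_eq, Module.finrank_pi,
    Fintype.card_fin]

end DimHelpers
set_option maxHeartbeats 1000000 in
/-- Let `p ≠ char F` be prime and `C = C^⊥ ⊆ F^(pt+f)` a self-dual code invariant
under the coordinate permutation `σ` with `t` `p`-cycles and `f` fixed points.
Then `dim C(σ) = (t+f)/2` and `dim E = t(p-1)/2`, where `C(σ)` is the fixed code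
and `E` the subcode of words vanishing at fixed points with zero cycle sums. -/
theorem dim_fixed_code_and_complement
    {F : Type*} [Field F] [Fintype F] {p t f : ℕ}
    (hp : p.Prime) (hchar : p ≠ ringChar F)
    (σ : Equiv.Perm (Fin (p * t + f)))
    (hσ : ∀ i : Fin (p * t + f), (σ i : ℕ) =
      if (i : ℕ) < p * t then p * ((i : ℕ) / p) + (((i : ℕ) % p + 1) % p)
      else (i : ℕ))
    (C : Submodule F (Fin (p * t + f) → F))
    (hsd : IsSelfDualWith stdB C)
    (hinv : C.map (permLinear σ) = C) :
    2 * Module.finrank F (C ⊓ constantOnCycles σ : Submodule F (Fin (p * t + f) → F)) = t + f ∧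
    2 * Module.finrank F (C ⊓ cycleSumZero σ p : Submodule F (Fin (p * t + f) → F)) = t * (p - 1) := by
  classical
  have hp0 : 0 < p := hp.pos
  have hpF : (p : F) ≠ 0 := by
    intro h
    have hdvd : ringChar F ∣ p := ringChar.dvd h
    rcases Nat.Prime.eq_one_or_self_of_dvd hp _ hdvd with h1 | h1
    · exact CharP.char_ne_one F (ringChar F) h1
    · exact hchar h1.symm
  set V₁ := (constantOnCycles σ : Submodule F (Fin (p * t + f) → F)) with hV₁
  set V₂ := (cycleSumZero σ p : Submodule F (Fin (p * t + f) → F)) with hV₂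
  set B : LinearMap.BilinForm F (Fin (p * t + f) → F) :=
    LinearMap.mk₂ F (fun x y => ∑ i, x i * y i)
      (fun x x' y => by simp [add_mul, Finset.sum_add_distrib])
      (fun a x y => by simp [Finset.mul_sum, mul_assoc])
      (fun x y y' => by simp [mul_add, Finset.sum_add_distrib])
      (fun a x y => by simp [Finset.mul_sum, mul_left_comm]) with hB
  have hBapp : ∀ x y : Fin (p * t + f) → F, B x y = ∑ i, x i * y i := fun x y => rfl
  have hBsym : ∀ x y, B x y = B y x := by
    intro x y
    rw [hBapp, hBapp]
    exact Finset.sum_congr rfl fun i _ => mul_comm _ _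
  have hrefl : B.IsRefl := fun x y h => by rw [hBsym]; exact h
  have horthtop : B.orthogonal ⊤ = ⊥ := by
    rw [eq_bot_iff]
    intro x hx
    have hz : ∀ i, x i = 0 := by
      intro i
      have h1 : B (Pi.single i 1) x = 0 := hx (Pi.single i 1) Submodule.mem_top
      have h2 : B (Pi.single i 1) x = x i := by
        rw [hBapp]
        simp [Pi.single_apply]
      rw [h2] at h1
      exact h1
    exact (Submodule.mem_bot F).mpr (funext hz)
  have hdim : ∀ W : Submodule F (Fin (p * t + f) → F),
      Module.finrank F W + Module.finrank F (B.orthogonal W) = p * t + f := by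
    intro W
    have h1 := LinearMap.BilinForm.finrank_add_finrank_orthogonal hrefl W
    rw [horthtop, inf_bot_eq, finrank_bot, Module.finrank_pi, Fintype.card_fin] at h1
    simpa using h1
  have horthC : B.orthogonal C = C := by
    ext x
    rw [LinearMap.BilinForm.mem_orthogonal_iff]
    constructor
    · intro h
      rw [hsd x]
      intro c hc
      show ∑ i, x i * c i = 0
      rw [← hBapp x c, hBsym x c]
      exact h c hc
    · intro hx n hn
      exact (hsd n).mp hn x hx
  have h2C : Module.finrank F C + Module.finrank F C = p * t + f := by
    have h1 := hdim C
    rwa [horthC] at h1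
  have havgV1 : ∀ x, cycAvg p σ x ∈ V₁ := fun x => cycAvg_mem_constant hp0 σ hσ x
  have hsubV2 : ∀ x, x - cycAvg p σ x ∈ V₂ := fun x => sub_cycAvg_mem hp0 hpF σ hσ x
  have havgC : ∀ x ∈ C, cycAvg p σ x ∈ C := fun x hx => cycAvg_mem_C σ C hinv x hx
  have hpair : ∀ x ∈ V₁, ∀ y ∈ V₂, B x y = 0 := by
    intro x hx y hy
    rw [hBapp]
    exact pairing_zero hp0 σ hσ x y hx hy
  have hbot : V₁ ⊓ V₂ = ⊥ := by
    rw [eq_bot_iff]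
    rintro x ⟨hx1, hx2⟩
    obtain ⟨-, hx2b⟩ := hx2
    have hz : ∀ i, x i = 0 := by
      intro i
      have h1 := hx2b i
      have h2 : ∀ k ∈ Finset.range p, x ((σ ^ k) i) = x i :=
        fun k _ => constant_pow σ x hx1 k i
      rw [Finset.sum_congr rfl h2, Finset.sum_const, Finset.card_range, nsmul_eq_mul] at h1
      exact (mul_eq_zero.mp h1).resolve_left hpF
    exact (Submodule.mem_bot F).mpr (funext hz)
  have hCsup : (C ⊓ V₁) ⊔ (C ⊓ V₂) = C := by
    apply le_antisymm (sup_le inf_le_left inf_le_left)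
    intro x hx
    have h1 : cycAvg p σ x ∈ C ⊓ V₁ := ⟨havgC x hx, havgV1 x⟩
    have h2 : x - cycAvg p σ x ∈ C ⊓ V₂ := ⟨Submodule.sub_mem C hx (havgC x hx), hsubV2 x⟩
    have h3 : x = cycAvg p σ x + (x - cycAvg p σ x) := by abel
    rw [h3]
    exact Submodule.add_mem_sup h1 h2
  have hCbot : (C ⊓ V₁) ⊓ (C ⊓ V₂) = ⊥ := by
    rw [eq_bot_iff, ← hbot]
    exact le_inf (le_trans inf_le_left inf_le_right) (le_trans inf_le_right inf_le_right)
  have htop : V₁ ⊔ V₂ = ⊤ := by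
    rw [eq_top_iff]
    intro x _
    have h3 : x = cycAvg p σ x + (x - cycAvg p σ x) := by abel
    rw [h3]
    exact Submodule.add_mem _ (Submodule.mem_sup_left (havgV1 x))
      (Submodule.mem_sup_right (hsubV2 x))
  have horthW1 : B.orthogonal (C ⊓ V₁) = C ⊔ V₂ := by
    apply le_antisymm
    · intro y hy
      have hyO : ∀ n ∈ C ⊓ V₁, B n y = 0 := hy
      have havgyC : cycAvg p σ y ∈ C := by
        refine (hsd _).mpr ?_
        intro c hc
        show ∑ i, (cycAvg p σ y) i * c i = 0
        rw [← hBapp]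
        have hc3 : c = cycAvg p σ c + (c - cycAvg p σ c) := by abel
        rw [hc3, map_add]
        have ht2 : B (cycAvg p σ y) (c - cycAvg p σ c) = 0 :=
          hpair _ (havgV1 y) _ (hsubV2 c)
        have ht1 : B (cycAvg p σ y) (cycAvg p σ c) = 0 := by
          have hOc : B (cycAvg p σ c) y = 0 := hyO _ ⟨havgC c hc, havgV1 c⟩
          have hy3 : y = cycAvg p σ y + (y - cycAvg p σ y) := by abel
          rw [hy3, map_add] at hOc
          have h01 : B (cycAvg p σ c) (y - cycAvg p σ y) = 0 :=
            hpair _ (havgV1 c) _ (hsubV2 y)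
          rw [h01, add_zero] at hOc
          rw [hBsym]
          exact hOc
        rw [ht1, ht2, add_zero]
      have hy3 : y = cycAvg p σ y + (y - cycAvg p σ y) := by abel
      rw [hy3]
      exact Submodule.add_mem _ (Submodule.mem_sup_left havgyC)
        (Submodule.mem_sup_right (hsubV2 y))
    · apply sup_le
      · intro c hc n hn
        exact (hsd n).mp hn.1 c hc
      · intro v hv n hn
        exact hpair n hn.2 v hv
  have horthW2 : B.orthogonal (C ⊓ V₂) = C ⊔ V₁ := by
    apply le_antisymm
    · intro y hy
      have hyO : ∀ n ∈ C ⊓ V₂, B n y = 0 := hy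
      have hsubC : y - cycAvg p σ y ∈ C := by
        refine (hsd _).mpr ?_
        intro c hc
        show ∑ i, (y - cycAvg p σ y) i * c i = 0
        rw [← hBapp]
        have hc3 : c = cycAvg p σ c + (c - cycAvg p σ c) := by abel
        rw [hc3, map_add]
        have ht1 : B (y - cycAvg p σ y) (cycAvg p σ c) = 0 := by
          rw [hBsym]
          exact hpair _ (havgV1 c) _ (hsubV2 y)
        have ht2 : B (y - cycAvg p σ y) (c - cycAvg p σ c) = 0 := by
          have hOc : B (c - cycAvg p σ c) y = 0 :=
            hyO _ ⟨Submodule.sub_mem C hc (havgC c hc), hsubV2 c⟩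
          have hy3 : y = cycAvg p σ y + (y - cycAvg p σ y) := by abel
          rw [hy3, map_add] at hOc
          have h01 : B (c - cycAvg p σ c) (cycAvg p σ y) = 0 := by
            rw [hBsym]
            exact hpair _ (havgV1 y) _ (hsubV2 c)
          rw [h01, zero_add] at hOc
          rw [hBsym]
          exact hOc
        rw [ht1, ht2, add_zero]
      have hy3 : y = (y - cycAvg p σ y) + cycAvg p σ y := by abel
      rw [hy3]
      exact Submodule.add_mem _ (Submodule.mem_sup_left hsubC)
        (Submodule.mem_sup_right (havgV1 y))
    · apply sup_le
      · intro c hc n hn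
        exact (hsd n).mp hn.1 c hc
      · intro v hv n hn
        show B n v = 0
        rw [hBsym]
        exact hpair v hv n hn.2
  have hd1 : Module.finrank F V₁ = t + f := finrank_const hp0 σ hσ
  have e7 : Module.finrank F V₁ + Module.finrank F V₂ = p * t + f := by
    have h1 := Submodule.finrank_sup_add_finrank_inf_eq V₁ V₂
    rw [htop, hbot, finrank_bot, finrank_top, Module.finrank_pi, Fintype.card_fin] at h1
    simpa using h1.symm
  have e6 : Module.finrank F (C ⊓ V₁ : Submodule F (Fin (p * t + f) → F))
      + Module.finrank F (C ⊓ V₂ : Submodule F (Fin (p * t + f) → F))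
      = Module.finrank F C := by
    have h1 := Submodule.finrank_sup_add_finrank_inf_eq (C ⊓ V₁) (C ⊓ V₂)
    rw [hCsup, hCbot, finrank_bot] at h1
    simpa using h1.symm
  have e1 : Module.finrank F (C ⊓ V₁ : Submodule F (Fin (p * t + f) → F))
      + Module.finrank F (C ⊔ V₂ : Submodule F (Fin (p * t + f) → F)) = p * t + f := by
    have h1 := hdim (C ⊓ V₁)
    rwa [horthW1] at h1
  have e2 : Module.finrank F (C ⊓ V₂ : Submodule F (Fin (p * t + f) → F))
      + Module.finrank F (C ⊔ V₁ : Submodule F (Fin (p * t + f) → F)) = p * t + f := by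
    have h1 := hdim (C ⊓ V₂)
    rwa [horthW2] at h1
  have e3 := Submodule.finrank_sup_add_finrank_inf_eq C V₂
  have e4 := Submodule.finrank_sup_add_finrank_inf_eq C V₁
  have e1' : Module.finrank F (C ⊓ V₁ : Submodule F (Fin (p * t + f) → F))
      + Module.finrank F (C ⊔ V₂ : Submodule F (Fin (p * t + f) → F))
      = Module.finrank F C + Module.finrank F C := e1.trans h2C.symm
  have e2' : Module.finrank F (C ⊓ V₂ : Submodule F (Fin (p * t + f) → F))
      + Module.finrank F (C ⊔ V₁ : Submodule F (Fin (p * t + f) → F))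
      = Module.finrank F C + Module.finrank F C := e2.trans h2C.symm
  have ha : 2 * Module.finrank F (C ⊓ V₁ : Submodule F (Fin (p * t + f) → F))
      = Module.finrank F V₁ := by linarith [e1', e2', e3, e4, e6]
  have hb : 2 * Module.finrank F (C ⊓ V₂ : Submodule F (Fin (p * t + f) → F))
      = Module.finrank F V₂ := by linarith [e1', e2', e3, e4, e6]
  constructor
  · rw [ha, hd1]
  · have hd2 : Module.finrank F V₂ + (t + f) = p * t + f := by
      rw [← hd1]
      linarith [e7]
    have hmul : t * (p - 1) + t = p * t := by
      have h1 : t * (p - 1) + t * 1 = t * ((p - 1) + 1) := (Nat.mul_add t (p - 1) 1).symm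
      rw [Nat.mul_one] at h1
      rw [h1, Nat.sub_add_cancel hp0, Nat.mul_comm]
    have hfin : 2 * Module.finrank F (C ⊓ V₂ : Submodule F (Fin (p * t + f) → F)) + t
        = t * (p - 1) + t := by
      rw [hb, hmul]
      linarith [hd2]
    exact Nat.add_right_cancel hfin
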